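/- Let z₁, z₂, z₃ ∈ ℂ be pairwise distinct, set a = −(z₁ + z₂ + z₃), b = z₁z₂ + z₁z₃ + z₂z₃, c = −z₁z₂z₃, and assume a² − 3b ≠ 0. Let I₁ and I₂ be the two roots (with multiplicity) of ID₃(P)(u) = (a² − 3b)u² + (ab − 9c)u + (b² − 3ac), so that I₁ + I₂ = −(ab − 9c)/(a² − 3b). Then the centroid of the two isodynamic points together with the mass center (z₁ + z₂ + z₃)/3 satisfies (I₁ + I₂ + (z₁ + z₂ + z₃)/3)/3 = (2/3)²·((z₁ + z₂ + z₃)³ − 27·z₁z₂z₃)/(4a² − 12b), where 4a² − 12b is the discriminant of P′(z) = 3z² + 2az + b. -/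

import Mathlib

/-- For pairwise distinct `z₁, z₂, z₃` with elementary symmetric
data `a, b, c` and `a² − 3b ≠ 0`, if `I₁, I₂` are the two roots (with
multiplicity) of the isodynamic quadratic `ID₃(P)`, then
`I₁ + I₂ = −(ab − 9c)/(a² − 3b)` and the centroid of the two isodynamic points
together with the mass center `(z₁ + z₂ + z₃)/3` equals
`(2/3)²·((z₁ + z₂ + z₃)³ − 27·z₁z₂z₃)/(4a² − 12b)`, where `4a² − 12b` is the
discriminant of `P′(z) = 3z² + 2az + b`. -/
theorem centroid_of_isodynamic_points_and_mass_center
    (z₁ z₂ z₃ : ℂ) (h12 : z₁ ≠ z₂) (h13 : z₁ ≠ z₃) (h23 : z₂ ≠ z₃)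
    (a b c : ℂ)
    (ha : a = -(z₁ + z₂ + z₃))
    (hb : b = z₁ * z₂ + z₁ * z₃ + z₂ * z₃)
    (hc : c = -(z₁ * z₂ * z₃))
    (hΔ : a ^ 2 - 3 * b ≠ 0)
    (I₁ I₂ : ℂ)
    (hroots : ∀ u : ℂ,
      (a ^ 2 - 3 * b) * u ^ 2 + (a * b - 9 * c) * u + (b ^ 2 - 3 * a * c)
        = (a ^ 2 - 3 * b) * (u - I₁) * (u - I₂)) :
    I₁ + I₂ = -(a * b - 9 * c) / (a ^ 2 - 3 * b) ∧
    (I₁ + I₂ + (z₁ + z₂ + z₃) / 3) / 3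
      = (2 / 3) ^ 2 * ((z₁ + z₂ + z₃) ^ 3 - 27 * (z₁ * z₂ * z₃))
          / (4 * a ^ 2 - 12 * b) := by
  have h1 := hroots 1
  have hm := hroots (-1)
  have hsum : I₁ + I₂ = -(a * b - 9 * c) / (a ^ 2 - 3 * b) := by
    rw [eq_div_iff hΔ]
    linear_combination (1/2:ℂ)*h1 - (1/2:ℂ)*hm
  refine ⟨hsum, ?_⟩
  have hΔ' : 4 * a ^ 2 - 12 * b ≠ 0 := by
    intro h; apply hΔ
    linear_combination (1/4 : ℂ) * h
  have hz : z₁ + z₂ + z₃ = -a := by rw [ha]; ring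
  have hz3 : z₁ * z₂ * z₃ = -c := by rw [hc]; ring
  rw [hsum, hz, hz3]
  have h4 : 4 * a ^ 2 - 12 * b = 4 * (a ^ 2 - 3 * b) := by ring
  rw [h4]
  field_simp
  linear_combination (4*a) * mul_inv_cancel₀ hΔ
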